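/- The multiple zeta values satisfy ζ(1,1,2) + 2ζ(2,2) = 2ζ(1,3) + 2ζ(1,1,2), equivalently 2ζ(2,2) = 2ζ(1,3) + ζ(1,1,2). -/

import Mathlib

/-- Multiple zeta value `ζ(k₁,…,k_r) = Σ_{0<m₁<⋯<m_r} ∏ mᵢ^{-kᵢ}`. -/
noncomputable def mzv (k : List ℕ) : ℝ :=
  ∑' m : {f : Fin k.length → ℕ+ // StrictMono f},
    ∏ i : Fin k.length, ((m.1 i : ℝ) ^ (k.get i))⁻¹

open ENNReal Filter Topology Finset

namespace MzvAux

noncomputable def J (n : ℕ) : ℝ≥0∞ := ENNReal.ofReal (((n : ℝ) + 1)⁻¹)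

lemma J_ne_top (n : ℕ) : J n ≠ ∞ := ENNReal.ofReal_ne_top

lemma J_toReal (n : ℕ) : (J n).toReal = ((n : ℝ) + 1)⁻¹ := by
  rw [J, ENNReal.toReal_ofReal (by positivity)]

lemma J_le_one (n : ℕ) : J n ≤ 1 := by
  rw [J, ← ENNReal.ofReal_one]
  apply ENNReal.ofReal_le_ofReal
  rw [inv_le_one_iff₀]; right; linarith [Nat.cast_nonneg (α := ℝ) n]

lemma J_antitone {m n : ℕ} (h : m ≤ n) : J n ≤ J m := by
  apply ENNReal.ofReal_le_ofReal
  apply inv_anti₀ (by positivity)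
  have : (m:ℝ) ≤ n := Nat.cast_le.mpr h
  linarith

/-- key partial fraction identity -/
lemma P1 (m n : ℕ) : J m * J n = (J m + J n) * J (m + n + 1) := by
  rw [J, J, J, ← ENNReal.ofReal_mul (by positivity),
    ← ENNReal.ofReal_add (by positivity) (by positivity),
    ← ENNReal.ofReal_mul (by positivity)]
  congr 1
  have hm : (m:ℝ) + 1 ≠ 0 := by positivity
  have hn : (n:ℝ) + 1 ≠ 0 := by positivity
  have hmn : ((m + n + 1 : ℕ):ℝ) + 1 ≠ 0 := by positivity
  field_simp
  push_cast
  ring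

/-- reindex `{(k,m) : k < m}` by gap coordinates -/
lemma tsum_ite_lt (F : ℕ → ℕ → ℝ≥0∞) :
    ∑' p : ℕ × ℕ, (if p.1 < p.2 then F p.1 p.2 else 0)
      = ∑' p : ℕ × ℕ, F p.1 (p.1 + p.2 + 1) := by
  symm
  have hg : Function.Injective (fun p : ℕ × ℕ => (p.1, p.1 + p.2 + 1)) := by
    intro a b h
    simp only [Prod.mk.injEq] at h
    obtain ⟨h1, h2⟩ := h
    exact Prod.ext h1 (by omega)
  have := hg.tsum_eq (f := fun q : ℕ × ℕ => if q.1 < q.2 then F q.1 q.2 else 0) ?_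
  · rw [← this]
    apply tsum_congr
    intro p
    simp only
    rw [if_pos (by omega)]
  · intro q hq
    simp only [Function.mem_support, ne_eq, ite_eq_right_iff, not_forall] at hq
    obtain ⟨h, -⟩ := hq
    exact ⟨(q.1, q.2 - q.1 - 1), by simp only; exact Prod.ext rfl (by omega)⟩

lemma tsum_pair_swap (F : ℕ → ℕ → ℝ≥0∞) :
    ∑' p : ℕ × ℕ, F p.1 p.2 = ∑' p : ℕ × ℕ, F p.2 p.1 :=
  ((Equiv.prodComm ℕ ℕ).tsum_eq (fun p : ℕ × ℕ => F p.1 p.2)).symm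

lemma tsum_ite_gt (F : ℕ → ℕ → ℝ≥0∞) :
    ∑' p : ℕ × ℕ, (if p.2 < p.1 then F p.1 p.2 else 0)
      = ∑' p : ℕ × ℕ, F (p.1 + p.2 + 1) p.1 := by
  rw [tsum_pair_swap (fun a b => if b < a then F a b else 0)]
  exact tsum_ite_lt (fun a b => F b a)

lemma tsum_ite_diag (F : ℕ → ℕ → ℝ≥0∞) :
    ∑' p : ℕ × ℕ, (if p.1 = p.2 then F p.1 p.2 else 0) = ∑' n : ℕ, F n n := by
  symm
  have hg : Function.Injective (fun n : ℕ => ((n, n) : ℕ × ℕ)) := by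
    intro a b h
    simpa using congrArg Prod.fst h
  have := hg.tsum_eq (f := fun q : ℕ × ℕ => if q.1 = q.2 then F q.1 q.2 else 0) ?_
  · rw [← this]; exact tsum_congr fun n => by simp
  · intro q hq
    simp only [Function.mem_support, ne_eq, ite_eq_right_iff, not_forall] at hq
    obtain ⟨h, -⟩ := hq
    exact ⟨q.1, by simp only; exact Prod.ext rfl h⟩

/-- trichotomy split of a double sum -/
lemma tsum_trichotomy (F : ℕ → ℕ → ℝ≥0∞) :
    ∑' p : ℕ × ℕ, F p.1 p.2
      = ∑' p : ℕ × ℕ, F p.1 (p.1 + p.2 + 1) + ∑' n : ℕ, F n n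
        + ∑' p : ℕ × ℕ, F (p.1 + p.2 + 1) p.1 := by
  rw [← tsum_ite_lt, ← tsum_ite_diag, ← tsum_ite_gt, ← ENNReal.tsum_add, ← ENNReal.tsum_add]
  apply tsum_congr
  intro p
  rcases lt_trichotomy p.1 p.2 with h | h | h
  · rw [if_pos h, if_neg (by omega), if_neg (by omega), add_zero, add_zero]
  · rw [if_neg (by omega), if_pos h, if_neg (by omega), zero_add, add_zero]
  · rw [if_neg (by omega), if_neg (by omega), if_pos h, zero_add, zero_add]

lemma sum_range_add' (g : ℕ → ℝ) (a b : ℕ) :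
    ∑ i ∈ range (a + b), g i = ∑ i ∈ range a, g i + ∑ i ∈ range b, g (a + i) := by
  induction b with
  | zero => simp
  | succ b ih => rw [← Nat.add_assoc, Finset.sum_range_succ, ih, Finset.sum_range_succ, add_assoc]

/-- the real harmonic partial sums -/
noncomputable def s (N : ℕ) : ℝ := ∑ p ∈ range N, ((p : ℝ) + 1)⁻¹

lemma hasSum_real_T (q : ℕ) :
    HasSum (fun p : ℕ => (((p:ℝ) + 1)⁻¹ * ((q:ℝ) + (p:ℝ) + 2)⁻¹))
      (((q:ℝ) + 1)⁻¹ * s (q + 1)) := by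
  have hnn : ∀ p : ℕ, 0 ≤ ((p:ℝ) + 1)⁻¹ * ((q:ℝ) + (p:ℝ) + 2)⁻¹ := fun p => by positivity
  rw [hasSum_iff_tendsto_nat_of_nonneg hnn]
  have key : ∀ N : ℕ, ∑ p ∈ range N, ((p:ℝ) + 1)⁻¹ * ((q:ℝ) + (p:ℝ) + 2)⁻¹
      = ((q:ℝ)+1)⁻¹ * (s (q+1) - ∑ i ∈ range (q+1), (((N+i : ℕ):ℝ) + 1)⁻¹) := by
    intro N
    have h1 : ∀ p : ℕ, ((p:ℝ) + 1)⁻¹ * ((q:ℝ) + (p:ℝ) + 2)⁻¹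
        = ((q:ℝ)+1)⁻¹ * (((p:ℝ)+1)⁻¹ - ((q:ℝ)+(p:ℝ)+2)⁻¹) := by
      intro p
      have h2 : (p:ℝ) + 1 ≠ 0 := by positivity
      have h3 : (q:ℝ) + (p:ℝ) + 2 ≠ 0 := by positivity
      have h4 : (q:ℝ) + 1 ≠ 0 := by positivity
      field_simp
      ring
    simp only [h1, ← Finset.mul_sum]
    congr 1
    rw [Finset.sum_sub_distrib]
    have h5 : ∑ p ∈ range N, ((q:ℝ)+(p:ℝ)+2)⁻¹ = ∑ p ∈ range N, (((q+1+p : ℕ):ℝ) + 1)⁻¹ := by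
      apply Finset.sum_congr rfl; intro p _; push_cast; ring_nf
    have h6 : s (N + (q+1)) = s N + ∑ i ∈ range (q+1), (((N + i:ℕ):ℝ)+1)⁻¹ := by
      rw [s, sum_range_add' (fun i => ((i:ℝ)+1)⁻¹) N (q+1)]; rfl
    have h7 : s ((q+1) + N) = s (q+1) + ∑ i ∈ range N, (((q+1+i:ℕ):ℝ)+1)⁻¹ := by
      rw [s, sum_range_add' (fun i => ((i:ℝ)+1)⁻¹) (q+1) N]; rfl
    have h8 : s N - (s ((q+1) + N) - s (q+1)) = s (q+1) - (s (N + (q+1)) - s N) := by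
      rw [show (q+1) + N = N + (q+1) by ring]; ring
    rw [h5]
    have e1 : ∑ p ∈ range N, (((q+1+p:ℕ):ℝ)+1)⁻¹ = s (q+1+N) - s (q+1) := by rw [h7]; ring
    have e2 : ∑ i ∈ range (q+1), (((N+i:ℕ):ℝ)+1)⁻¹ = s (N+(q+1)) - s N := by rw [h6]; ring
    have e3 : s (q+1+N) = s (N+(q+1)) := by rw [Nat.add_comm]
    have hsN : (∑ x ∈ range N, ((x:ℝ)+1)⁻¹) = s N := rfl
    rw [hsN, e1, e2, e3]
    ring
  simp only [key]
  have hlim : Tendsto (fun N : ℕ => ∑ i ∈ range (q+1), (((N+i : ℕ):ℝ) + 1)⁻¹) atTop (𝓝 0) := by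
    have : Tendsto (fun N : ℕ => ∑ i ∈ range (q+1), (((N+i : ℕ):ℝ) + 1)⁻¹) atTop
        (𝓝 (∑ i ∈ range (q+1), (0:ℝ))) := by
      apply tendsto_finset_sum
      intro i _
      have h1 : Tendsto (fun N : ℕ => ((N:ℝ) + (i:ℝ) + 1)) atTop atTop := by
        apply tendsto_atTop_add_const_right
        apply tendsto_atTop_add_const_right
        exact tendsto_natCast_atTop_atTop
      have := (tendsto_inv_atTop_zero).comp h1
      simpa [Function.comp_def, Nat.cast_add] using this
    simpa using this
  have : Tendsto (fun N : ℕ => ((q:ℝ)+1)⁻¹ * (s (q+1) - ∑ i ∈ range (q+1), (((N+i : ℕ):ℝ) + 1)⁻¹))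
      atTop (𝓝 (((q:ℝ)+1)⁻¹ * (s (q+1) - 0))) :=
    (tendsto_const_nhds.sub hlim).const_mul _
  simpa using this

/-- Telescoping: `∑_p 1/((p+1)(q+p+2)) = H_{q+1}/(q+1)` in `ℝ≥0∞`. -/
lemma T (q : ℕ) : ∑' p : ℕ, J p * J (q + p + 1) = J q * ∑ k ∈ range (q + 1), J k := by
  have hnn : ∀ p : ℕ, 0 ≤ ((p:ℝ) + 1)⁻¹ * ((q:ℝ) + (p:ℝ) + 2)⁻¹ := fun p => by positivity
  have h1 : ∀ p : ℕ, J p * J (q + p + 1)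
      = ENNReal.ofReal (((p:ℝ) + 1)⁻¹ * ((q:ℝ) + (p:ℝ) + 2)⁻¹) := by
    intro p
    rw [J, J, ← ENNReal.ofReal_mul (by positivity)]
    congr 2
    push_cast; ring
  have hs := hasSum_real_T q
  calc ∑' p : ℕ, J p * J (q + p + 1)
      = ∑' p : ℕ, ENNReal.ofReal (((p:ℝ) + 1)⁻¹ * ((q:ℝ) + (p:ℝ) + 2)⁻¹) := tsum_congr h1
    _ = ENNReal.ofReal (∑' p : ℕ, ((p:ℝ) + 1)⁻¹ * ((q:ℝ) + (p:ℝ) + 2)⁻¹) :=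
        (ENNReal.ofReal_tsum_of_nonneg hnn hs.summable).symm
    _ = ENNReal.ofReal (((q:ℝ) + 1)⁻¹ * s (q + 1)) := by rw [hs.tsum_eq]
    _ = J q * ∑ k ∈ range (q + 1), J k := by
        rw [ENNReal.ofReal_mul (by positivity), J, s,
          ENNReal.ofReal_sum_of_nonneg (fun i _ => by positivity)]
        rfl

/-- Tail bound: `∑_e 1/(b+e+2)^2 ≤ 1/(b+1)`. -/
lemma TB (b : ℕ) : ∑' e : ℕ, J (b + e + 1) ^ 2 ≤ J b := by
  have g : ℕ → ℝ := fun e => ((b:ℝ) + (e:ℝ) + 1)⁻¹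
  apply ENNReal.tsum_le_of_sum_range_le
  intro N
  have h1 : ∀ e : ℕ, J (b + e + 1) ^ 2
      ≤ ENNReal.ofReal ((((b:ℝ)+(e:ℝ)+1))⁻¹ - ((b:ℝ)+((e:ℕ)+1:ℕ)+1)⁻¹) := by
    intro e
    rw [J, ← ENNReal.ofReal_pow (by positivity)]
    apply ENNReal.ofReal_le_ofReal
    have h2 : (0:ℝ) < (b:ℝ)+(e:ℝ)+1 := by positivity
    have h3 : (0:ℝ) < (b:ℝ)+(e:ℝ)+2 := by positivity
    have h4 : (((b+e+1:ℕ):ℝ) + 1) = (b:ℝ)+(e:ℝ)+2 := by push_cast; ring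
    have h4' : ((b:ℝ)+(((e:ℕ)+1:ℕ):ℝ)+1) = (b:ℝ)+(e:ℝ)+2 := by push_cast; ring
    rw [h4, h4']
    have h5 : ((b:ℝ)+(e:ℝ)+1)⁻¹ - ((b:ℝ)+(e:ℝ)+2)⁻¹
        = (((b:ℝ)+(e:ℝ)+1) * ((b:ℝ)+(e:ℝ)+2))⁻¹ := by
      rw [inv_sub_inv (ne_of_gt h2) (ne_of_gt h3)]
      norm_num
    rw [h5, sq, ← mul_inv]
    apply inv_anti₀ (by positivity)
    nlinarith
  calc ∑ e ∈ range N, J (b + e + 1) ^ 2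
      ≤ ∑ e ∈ range N, ENNReal.ofReal ((((b:ℝ)+(e:ℝ)+1))⁻¹ - ((b:ℝ)+((e:ℕ)+1:ℕ)+1)⁻¹) :=
        Finset.sum_le_sum (fun e _ => h1 e)
    _ = ENNReal.ofReal (∑ e ∈ range N, ((((b:ℝ)+(e:ℝ)+1))⁻¹ - ((b:ℝ)+((e:ℕ)+1:ℕ)+1)⁻¹)) := by
        rw [ENNReal.ofReal_sum_of_nonneg]
        intro e _
        have : ((b:ℝ)+(((e:ℕ)+1:ℕ):ℝ)+1) = (b:ℝ)+(e:ℝ)+2 := by push_cast; ring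
        rw [this]
        have h2 : (0:ℝ) < (b:ℝ)+(e:ℝ)+1 := by positivity
        have : ((b:ℝ)+(e:ℝ)+2)⁻¹ ≤ ((b:ℝ)+(e:ℝ)+1)⁻¹ := by
          apply inv_anti₀ h2; linarith
        linarith
    _ = ENNReal.ofReal (((b:ℝ)+(0:ℕ)+1)⁻¹ - ((b:ℝ)+(N:ℕ)+1)⁻¹) := by
        rw [Finset.sum_range_sub' (fun e : ℕ => ((b:ℝ) + (e:ℝ) + 1)⁻¹) N]
    _ ≤ J b := by
        rw [J]
        apply ENNReal.ofReal_le_ofReal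
        have : (0:ℝ) ≤ ((b:ℝ)+(N:ℕ)+1)⁻¹ := by positivity
        simp only [Nat.cast_zero, add_zero]
        linarith

noncomputable def ZA : ℝ≥0∞ := ∑' p : ℕ × ℕ, J p.1 ^ 2 * J (p.1 + p.2 + 1) ^ 2
noncomputable def ZB : ℝ≥0∞ := ∑' p : ℕ × ℕ, J p.1 * J (p.1 + p.2 + 1) ^ 3
noncomputable def ZC : ℝ≥0∞ :=
  ∑' t : ℕ × ℕ × ℕ, J t.1 * J (t.1 + t.2.1 + 1) * J (t.1 + t.2.1 + t.2.2 + 2) ^ 2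
noncomputable def Z4 : ℝ≥0∞ := ∑' n : ℕ, J n ^ 4
noncomputable def ZU : ℝ≥0∞ := ∑' p : ℕ × ℕ, J p.1 * J p.2 * J (p.1 + p.2 + 1) ^ 2
noncomputable def ZD : ℝ≥0∞ := ∑' p : ℕ × ℕ, J p.1 ^ 2 * J p.2 * J (p.1 + p.2 + 1)
noncomputable def Z22 : ℝ≥0∞ := ∑' p : ℕ × ℕ, J p.1 ^ 2 * J p.2 ^ 2
noncomputable def ZX : ℝ≥0∞ :=
  ∑' t : ℕ × ℕ × ℕ, J t.1 * J (t.1 + t.2.1 + 1) * J t.2.2 * J (t.1 + t.2.1 + t.2.2 + 2)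

/- (β) U = 2B -/
lemma rel_U : ZU = ZB + ZB := by
  have h : ∀ p : ℕ × ℕ, J p.1 * J p.2 * J (p.1 + p.2 + 1) ^ 2
      = J p.1 * J (p.1 + p.2 + 1) ^ 3 + J p.2 * J (p.1 + p.2 + 1) ^ 3 := by
    intro p
    rw [P1 p.1 p.2]
    ring
  rw [ZU, tsum_congr h, ENNReal.tsum_add]
  congr 1
  rw [tsum_pair_swap (fun a b => J b * J (a + b + 1) ^ 3), ZB]
  apply tsum_congr
  intro p
  rw [Nat.add_comm p.2 p.1]

/- (α) D = A + U -/
lemma rel_D : ZD = ZA + ZU := by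
  have h : ∀ p : ℕ × ℕ, J p.1 ^ 2 * J p.2 * J (p.1 + p.2 + 1)
      = J p.1 ^ 2 * J (p.1 + p.2 + 1) ^ 2 + J p.1 * J p.2 * J (p.1 + p.2 + 1) ^ 2 := by
    intro p
    have key := P1 p.1 p.2
    calc J p.1 ^ 2 * J p.2 * J (p.1 + p.2 + 1)
        = J p.1 * ((J p.1 * J p.2) * J (p.1 + p.2 + 1)) := by ring
      _ = J p.1 * (((J p.1 + J p.2) * J (p.1 + p.2 + 1)) * J (p.1 + p.2 + 1)) := by rw [key]
      _ = J p.1 ^ 2 * J (p.1 + p.2 + 1) ^ 2 + J p.1 * J p.2 * J (p.1 + p.2 + 1) ^ 2 := by ring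
  rw [ZD, tsum_congr h, ENNReal.tsum_add]
  rfl

/- (γ) 2D = Z22 -/
lemma rel_DD : ZD + ZD = Z22 := by
  have hswap : ZD = ∑' p : ℕ × ℕ, J p.2 ^ 2 * J p.1 * J (p.1 + p.2 + 1) := by
    rw [ZD, tsum_pair_swap (fun a b => J a ^ 2 * J b * J (a + b + 1))]
    apply tsum_congr; intro p; rw [Nat.add_comm p.2 p.1]
  nth_rewrite 2 [hswap]
  rw [ZD, ← ENNReal.tsum_add, Z22]
  apply tsum_congr
  intro p
  have key : (J p.1 + J p.2) * J (p.1 + p.2 + 1) = J p.1 * J p.2 := (P1 p.1 p.2).symm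
  calc J p.1 ^ 2 * J p.2 * J (p.1 + p.2 + 1) + J p.2 ^ 2 * J p.1 * J (p.1 + p.2 + 1)
      = (J p.1 * J p.2) * ((J p.1 + J p.2) * J (p.1 + p.2 + 1)) := by ring
    _ = (J p.1 * J p.2) * (J p.1 * J p.2) := by rw [key]
    _ = J p.1 ^ 2 * J p.2 ^ 2 := by ring

/- (δ) Z22 = 2A + Z4 -/
lemma rel_Z22 : Z22 = ZA + Z4 + ZA := by
  rw [Z22, tsum_trichotomy (fun a b => J a ^ 2 * J b ^ 2)]
  congr 1
  · congr 1
    rw [Z4]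
    apply tsum_congr; intro n; ring
  · rw [ZA]
    apply tsum_congr; intro p; ring

lemma tsum_ite_range (m : ℕ) (G : ℕ → ℝ≥0∞) :
    (∑' k : ℕ, if k < m then G k else 0) = ∑ k ∈ range m, G k := by
  rw [tsum_eq_sum (s := range m) (fun b hb => if_neg (by simpa using hb))]
  exact Finset.sum_congr rfl fun k hk => if_pos (by simpa using hk)

/- (η) D = B + Z4 -/
lemma rel_D_split : ZD = ZB + Z4 := by
  have h1 : ZD = ∑' m : ℕ, ∑' n : ℕ, J m ^ 2 * (J n * J (m + n + 1)) := by
    rw [ZD, ENNReal.tsum_prod']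
    exact tsum_congr fun m => tsum_congr fun n => by ring
  have h2 : ∀ m : ℕ, ∑' n : ℕ, J m ^ 2 * (J n * J (m + n + 1))
      = (∑' k : ℕ, if k < m then J m ^ 3 * J k else 0) + J m ^ 4 := by
    intro m
    calc ∑' n : ℕ, J m ^ 2 * (J n * J (m + n + 1))
        = J m ^ 2 * ∑' n : ℕ, J n * J (m + n + 1) := ENNReal.tsum_mul_left
      _ = J m ^ 2 * (J m * ∑ k ∈ range (m + 1), J k) := by rw [T m]
      _ = J m ^ 3 * (∑ k ∈ range m, J k) + J m ^ 4 := by rw [Finset.sum_range_succ]; ring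
      _ = (∑' k : ℕ, if k < m then J m ^ 3 * J k else 0) + J m ^ 4 := by
          rw [tsum_ite_range m (fun k => J m ^ 3 * J k), ← Finset.mul_sum]
  rw [h1, tsum_congr h2, ENNReal.tsum_add]
  congr 1
  have h3 : (∑' (a : ℕ) (k : ℕ), if k < a then J a ^ 3 * J k else 0)
      = ∑' p : ℕ × ℕ, (if p.2 < p.1 then J p.1 ^ 3 * J p.2 else 0) :=
    (ENNReal.tsum_prod' (f := fun p : ℕ × ℕ => if p.2 < p.1 then J p.1 ^ 3 * J p.2 else 0)).symm
  rw [h3, tsum_ite_gt (fun a b => J a ^ 3 * J b), ZB]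
  exact tsum_congr fun p => by ring

/-- coordinate permutation (a,b,c) ↦ (a,c,b) -/
def e23 : ℕ × ℕ × ℕ ≃ ℕ × ℕ × ℕ where
  toFun t := (t.1, t.2.2, t.2.1)
  invFun t := (t.1, t.2.2, t.2.1)
  left_inv t := rfl
  right_inv t := rfl

/-- coordinate permutation sending (m,d,p) to (p,m,d) -/
def ecyc : ℕ × ℕ × ℕ ≃ ℕ × ℕ × ℕ where
  toFun t := (t.2.2, t.1, t.2.1)
  invFun t := (t.2.1, t.2.2, t.1)
  left_inv t := rfl
  right_inv t := rfl

/- (ε) X = 3C -/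
lemma rel_X_pf : ZX = ZC + (ZC + ZC) := by
  have h : ∀ t : ℕ × ℕ × ℕ, J t.1 * J (t.1 + t.2.1 + 1) * J t.2.2 * J (t.1 + t.2.1 + t.2.2 + 2)
      = J t.1 * J (t.1 + t.2.1 + 1) * J (t.1 + t.2.1 + t.2.2 + 2) ^ 2
        + J t.1 * J t.2.2 * J (t.1 + t.2.1 + t.2.2 + 2) ^ 2 := by
    rintro ⟨m, d, p⟩
    simp only
    have key := P1 (m + d + 1) p
    rw [show m + d + 1 + p + 1 = m + d + p + 2 by omega] at key
    calc J m * J (m + d + 1) * J p * J (m + d + p + 2)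
        = J m * (J (m + d + 1) * J p) * J (m + d + p + 2) := by ring
      _ = J m * ((J (m + d + 1) + J p) * J (m + d + p + 2)) * J (m + d + p + 2) := by rw [key]
      _ = J m * J (m + d + 1) * J (m + d + p + 2) ^ 2 + J m * J p * J (m + d + p + 2) ^ 2 := by
          ring
  rw [ZX, tsum_congr h, ENNReal.tsum_add]
  congr 1
  · -- X2 = ZC + ZC
    have h2 : ∀ t : ℕ × ℕ × ℕ, J t.1 * J t.2.2 * J (t.1 + t.2.1 + t.2.2 + 2) ^ 2
        = J t.1 * J (t.1 + t.2.2 + 1) * J (t.1 + t.2.1 + t.2.2 + 2) ^ 2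
          + J t.2.2 * J (t.1 + t.2.2 + 1) * J (t.1 + t.2.1 + t.2.2 + 2) ^ 2 := by
      rintro ⟨m, d, p⟩
      simp only
      have key := P1 m p
      calc J m * J p * J (m + d + p + 2) ^ 2
          = (J m + J p) * J (m + p + 1) * J (m + d + p + 2) ^ 2 := by rw [key]
        _ = _ := by ring
    rw [tsum_congr h2, ENNReal.tsum_add]
    congr 1
    · -- via e23 : term (m,d,p) = ZCterm (m,p,d)
      rw [ZC, ← e23.tsum_eq (fun t : ℕ × ℕ × ℕ =>
        J t.1 * J (t.1 + t.2.1 + 1) * J (t.1 + t.2.1 + t.2.2 + 2) ^ 2)]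
      apply tsum_congr
      rintro ⟨m, d, p⟩
      simp only [e23, Equiv.coe_fn_mk]
      rw [show m + p + d + 2 = m + d + p + 2 by omega]
    · -- via ecyc : term (m,d,p) = ZCterm (p,m,d)
      rw [ZC, ← ecyc.tsum_eq (fun t : ℕ × ℕ × ℕ =>
        J t.1 * J (t.1 + t.2.1 + 1) * J (t.1 + t.2.1 + t.2.2 + 2) ^ 2)]
      apply tsum_congr
      rintro ⟨m, d, p⟩
      simp only [ecyc, Equiv.coe_fn_mk]
      rw [show p + m + 1 = m + p + 1 by omega, show p + m + d + 2 = m + d + p + 2 by omega]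

lemma sum_range_addE (g : ℕ → ℝ≥0∞) (a b : ℕ) :
    ∑ i ∈ range (a + b), g i = ∑ i ∈ range a, g i + ∑ i ∈ range b, g (a + i) := by
  induction b with
  | zero => simp
  | succ b ih => rw [← Nat.add_assoc, Finset.sum_range_succ, ih, Finset.sum_range_succ, add_assoc]

lemma range_split (m d : ℕ) :
    ∑ k ∈ range (m + d + 2), J k
      = (∑ k ∈ range m, J k) + J m + (∑ j ∈ range d, J (m + 1 + j)) + J (m + d + 1) := by
  have h1 : m + d + 2 = (m + 1) + (d + 1) := by omega
  rw [h1, sum_range_addE J (m + 1) (d + 1), Finset.sum_range_succ, Finset.sum_range_succ]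
  rw [show m + 1 + d = m + d + 1 by omega]
  ring

/- (ζ) X = C + C + A + B via telescoping -/
lemma rel_X_tel : ZX = ZC + ZC + ZA + ZB := by
  -- flatten and telescope the inner sum
  have h1 : ZX = ∑' m : ℕ, ∑' d : ℕ, J m * J (m + d + 1) ^ 2 * ∑ k ∈ range (m + d + 2), J k := by
    rw [ZX, ENNReal.tsum_prod']
    apply tsum_congr; intro m
    have h2 : (∑' q : ℕ × ℕ, J m * J (m + q.1 + 1) * J q.2 * J (m + q.1 + q.2 + 2))
        = ∑' d : ℕ, ∑' p : ℕ, J m * J (m + d + 1) * J p * J (m + d + p + 2) :=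
      ENNReal.tsum_prod' (f := fun q : ℕ × ℕ => J m * J (m + q.1 + 1) * J q.2 * J (m + q.1 + q.2 + 2))
    rw [h2]
    apply tsum_congr; intro d
    calc ∑' p : ℕ, J m * J (m + d + 1) * J p * J (m + d + p + 2)
        = ∑' p : ℕ, (J m * J (m + d + 1)) * (J p * J ((m + d + 1) + p + 1)) := by
          apply tsum_congr; intro p
          rw [show m + d + 1 + p + 1 = m + d + p + 2 by omega]
          ring
      _ = (J m * J (m + d + 1)) * ∑' p : ℕ, J p * J ((m + d + 1) + p + 1) :=
          ENNReal.tsum_mul_left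
      _ = (J m * J (m + d + 1)) * (J (m + d + 1) * ∑ k ∈ range ((m + d + 1) + 1), J k) := by
          rw [T (m + d + 1)]
      _ = J m * J (m + d + 1) ^ 2 * ∑ k ∈ range (m + d + 2), J k := by
          rw [show (m + d + 1) + 1 = m + d + 2 by omega]
          ring
  -- split the harmonic factor into four pieces
  have h3 : ∀ m d : ℕ, J m * J (m + d + 1) ^ 2 * ∑ k ∈ range (m + d + 2), J k
      = ((∑' k : ℕ, if k < m then J m * J (m + d + 1) ^ 2 * J k else 0)
          + J m ^ 2 * J (m + d + 1) ^ 2)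
        + ((∑' j : ℕ, if j < d then J m * J (m + d + 1) ^ 2 * J (m + 1 + j) else 0)
          + J m * J (m + d + 1) ^ 3) := by
    intro m d
    rw [range_split m d, tsum_ite_range m (fun k => J m * J (m + d + 1) ^ 2 * J k),
      tsum_ite_range d (fun j => J m * J (m + d + 1) ^ 2 * J (m + 1 + j)),
      ← Finset.mul_sum, ← Finset.mul_sum]
    ring
  rw [h1]
  rw [tsum_congr (fun m => tsum_congr (fun d => h3 m d))]
  rw [tsum_congr (fun m : ℕ => ENNReal.tsum_add), ENNReal.tsum_add]
  rw [tsum_congr (fun m : ℕ => ENNReal.tsum_add), ENNReal.tsum_add]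
  rw [tsum_congr (fun m : ℕ => ENNReal.tsum_add), ENNReal.tsum_add]
  have W1 : (∑' m : ℕ, ∑' d : ℕ, ∑' k : ℕ, if k < m then J m * J (m + d + 1) ^ 2 * J k else 0)
      = ZC := by
    have e1 : (∑' t : ℕ × ℕ × ℕ,
          (if t.2.2 < t.1 then J t.1 * J (t.1 + t.2.1 + 1) ^ 2 * J t.2.2 else 0))
        = ∑' m : ℕ, ∑' d : ℕ, ∑' k : ℕ, (if k < m then J m * J (m + d + 1) ^ 2 * J k else 0) := by
      rw [ENNReal.tsum_prod']
      exact tsum_congr fun m => ENNReal.tsum_prod'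
    rw [← e1]
    have hinj : Function.Injective
        (fun c : ℕ × ℕ × ℕ => ((c.1 + c.2.1 + 1, c.2.2, c.1) : ℕ × ℕ × ℕ)) := by
      rintro ⟨a, g, e⟩ ⟨a', g', e'⟩ h
      simp only [Prod.mk.injEq] at h
      obtain ⟨h1, h2, h3⟩ := h
      simp only [Prod.mk.injEq]
      refine ⟨by omega, by omega, by omega⟩
    have hsupp : Function.support
          (fun t : ℕ × ℕ × ℕ => if t.2.2 < t.1 then J t.1 * J (t.1 + t.2.1 + 1) ^ 2 * J t.2.2 else 0)
        ⊆ Set.range (fun c : ℕ × ℕ × ℕ => ((c.1 + c.2.1 + 1, c.2.2, c.1) : ℕ × ℕ × ℕ)) := by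
      rintro ⟨m, d, k⟩ ht
      simp only [Function.mem_support, ne_eq, ite_eq_right_iff, not_forall] at ht
      obtain ⟨hlt, -⟩ := ht
      exact ⟨(k, m - k - 1, d), by simp only [Prod.mk.injEq, and_true, true_and]; omega⟩
    rw [← hinj.tsum_eq hsupp, ZC]
    apply tsum_congr
    rintro ⟨a, g, e⟩
    simp only
    rw [if_pos (by omega : a < a + g + 1),
      show a + g + 1 + e + 1 = a + g + e + 2 by omega]
    ring
  have W2 : (∑' m : ℕ, ∑' d : ℕ, J m ^ 2 * J (m + d + 1) ^ 2) = ZA :=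
    (ENNReal.tsum_prod' (f := fun p : ℕ × ℕ => J p.1 ^ 2 * J (p.1 + p.2 + 1) ^ 2)).symm
  have W3 : (∑' m : ℕ, ∑' d : ℕ, ∑' j : ℕ, if j < d then J m * J (m + d + 1) ^ 2 * J (m + 1 + j) else 0)
      = ZC := by
    have e1 : (∑' t : ℕ × ℕ × ℕ,
          (if t.2.2 < t.2.1 then J t.1 * J (t.1 + t.2.1 + 1) ^ 2 * J (t.1 + 1 + t.2.2) else 0))
        = ∑' m : ℕ, ∑' d : ℕ, ∑' j : ℕ,
            (if j < d then J m * J (m + d + 1) ^ 2 * J (m + 1 + j) else 0) := by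
      rw [ENNReal.tsum_prod']
      exact tsum_congr fun m => ENNReal.tsum_prod'
    rw [← e1]
    have hinj : Function.Injective
        (fun c : ℕ × ℕ × ℕ => ((c.1, c.2.1 + c.2.2 + 1, c.2.1) : ℕ × ℕ × ℕ)) := by
      rintro ⟨a, g, e⟩ ⟨a', g', e'⟩ h
      simp only [Prod.mk.injEq] at h
      obtain ⟨h1, h2, h3⟩ := h
      simp only [Prod.mk.injEq]
      refine ⟨by omega, by omega, by omega⟩
    have hsupp : Function.support
          (fun t : ℕ × ℕ × ℕ => if t.2.2 < t.2.1 then J t.1 * J (t.1 + t.2.1 + 1) ^ 2 * J (t.1 + 1 + t.2.2) else 0)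
        ⊆ Set.range (fun c : ℕ × ℕ × ℕ => ((c.1, c.2.1 + c.2.2 + 1, c.2.1) : ℕ × ℕ × ℕ)) := by
      rintro ⟨m, d, j⟩ ht
      simp only [Function.mem_support, ne_eq, ite_eq_right_iff, not_forall] at ht
      obtain ⟨hlt, -⟩ := ht
      exact ⟨(m, j, d - j - 1), by simp only [Prod.mk.injEq, and_true, true_and]; omega⟩
    rw [← hinj.tsum_eq hsupp, ZC]
    apply tsum_congr
    rintro ⟨a, g, e⟩
    simp only
    rw [if_pos (by omega : g < g + e + 1),
      show a + (g + e + 1) + 1 = a + g + e + 2 by omega,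
      show a + 1 + g = a + g + 1 by omega]
    ring
  have W4 : (∑' m : ℕ, ∑' d : ℕ, J m * J (m + d + 1) ^ 3) = ZB :=
    (ENNReal.tsum_prod' (f := fun p : ℕ × ℕ => J p.1 * J (p.1 + p.2 + 1) ^ 3)).symm
  rw [W1, W2, W3, W4]
  ring

lemma sumJ2_ne_top : (∑' n : ℕ, J n ^ 2) ≠ ∞ := by
  have h1 : (∑' n : ℕ, J n ^ 2) ≤ J 0 ^ 2 + J 0 := by
    rw [tsum_eq_zero_add' (f := fun n : ℕ => J n ^ 2) ENNReal.summable]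
    apply add_le_add le_rfl
    have h2 : (∑' n : ℕ, J (n + 1) ^ 2) = ∑' n : ℕ, J (0 + n + 1) ^ 2 :=
      tsum_congr fun n => by rw [Nat.zero_add]
    rw [h2]
    exact TB 0
  exact ne_top_of_le_ne_top (ENNReal.add_ne_top.mpr ⟨ENNReal.pow_ne_top (J_ne_top 0), J_ne_top 0⟩) h1

lemma ZA_ne_top : ZA ≠ ∞ := by
  have h1 : ZA ≤ ∑' n : ℕ, J n ^ 2 := by
    rw [ZA, ENNReal.tsum_prod']
    calc ∑' m : ℕ, ∑' d : ℕ, J m ^ 2 * J (m + d + 1) ^ 2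
        = ∑' m : ℕ, J m ^ 2 * ∑' d : ℕ, J (m + d + 1) ^ 2 :=
          tsum_congr fun m => ENNReal.tsum_mul_left
      _ ≤ ∑' m : ℕ, J m ^ 2 * 1 :=
          Summable.tsum_le_tsum (fun m => mul_le_mul_right ((TB m).trans (J_le_one m)) _)
            ENNReal.summable ENNReal.summable
      _ = ∑' m : ℕ, J m ^ 2 := by simp [mul_one]
  exact ne_top_of_le_ne_top sumJ2_ne_top h1

lemma ZB_le_ZA : ZB ≤ ZA := by
  rw [ZA, ZB]
  apply Summable.tsum_le_tsum _ ENNReal.summable ENNReal.summable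
  intro p
  calc J p.1 * J (p.1 + p.2 + 1) ^ 3
      = (J p.1 * J (p.1 + p.2 + 1) ^ 2) * J (p.1 + p.2 + 1) := by ring
    _ ≤ (J p.1 * J (p.1 + p.2 + 1) ^ 2) * J p.1 :=
        mul_le_mul_right (J_antitone (by omega)) _
    _ = J p.1 ^ 2 * J (p.1 + p.2 + 1) ^ 2 := by ring

lemma ZB_ne_top : ZB ≠ ∞ := ne_top_of_le_ne_top ZA_ne_top ZB_le_ZA

lemma ZC_ne_top : ZC ≠ ∞ := by
  have e1 : ZC = ∑' a : ℕ, ∑' d : ℕ, ∑' e : ℕ, J a * J (a + d + 1) * J (a + d + e + 2) ^ 2 := by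
    rw [ZC, ENNReal.tsum_prod']
    exact tsum_congr fun a => ENNReal.tsum_prod'
  have h1 : ZC ≤ ∑' n : ℕ, J n ^ 2 := by
    rw [e1]
    calc ∑' a : ℕ, ∑' d : ℕ, ∑' e : ℕ, J a * J (a + d + 1) * J (a + d + e + 2) ^ 2
        = ∑' a : ℕ, ∑' d : ℕ, (J a * J (a + d + 1)) * ∑' e : ℕ, J ((a + d + 1) + e + 1) ^ 2 := by
          apply tsum_congr; intro a; apply tsum_congr; intro d
          rw [ENNReal.tsum_mul_left.symm]
          apply tsum_congr; intro e
          rw [show (a + d + 1) + e + 1 = a + d + e + 2 by omega]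
      _ ≤ ∑' a : ℕ, ∑' d : ℕ, (J a * J (a + d + 1)) * J (a + d + 1) := by
          apply Summable.tsum_le_tsum _ ENNReal.summable ENNReal.summable
          intro a
          exact Summable.tsum_le_tsum (fun d => mul_le_mul_right (TB (a + d + 1)) _)
            ENNReal.summable ENNReal.summable
      _ = ∑' a : ℕ, J a * ∑' d : ℕ, J (a + d + 1) ^ 2 := by
          apply tsum_congr; intro a
          rw [← ENNReal.tsum_mul_left]
          exact tsum_congr fun d => by ring
      _ ≤ ∑' a : ℕ, J a * J a :=
          Summable.tsum_le_tsum (fun a => mul_le_mul_right (TB a) _) ENNReal.summable ENNReal.summable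
      _ = ∑' a : ℕ, J a ^ 2 := tsum_congr fun a => by ring
  exact ne_top_of_le_ne_top sumJ2_ne_top h1

lemma hDa : ZD = ZA + (ZB + ZB) := by rw [rel_D, rel_U]

lemma h4B : ZB + ZB + (ZB + ZB) = Z4 := by
  have e : (ZA + (ZB + ZB)) + (ZA + (ZB + ZB)) = ZA + Z4 + ZA := by
    rw [← hDa, rel_DD, rel_Z22]
  have e2 : ZA + ZA + (ZB + ZB + (ZB + ZB)) = ZA + ZA + Z4 := by
    calc ZA + ZA + (ZB + ZB + (ZB + ZB))
        = (ZA + (ZB + ZB)) + (ZA + (ZB + ZB)) := by ring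
      _ = ZA + Z4 + ZA := e
      _ = ZA + ZA + Z4 := by ring
  exact (ENNReal.add_right_inj (ENNReal.add_ne_top.mpr ⟨ZA_ne_top, ZA_ne_top⟩)).mp e2

lemma hABZ4 : ZA + ZB = Z4 := by
  have e : ZB + (ZA + ZB) = ZB + Z4 := by
    calc ZB + (ZA + ZB) = ZA + (ZB + ZB) := by ring
      _ = ZD := hDa.symm
      _ = ZB + Z4 := rel_D_split
  exact (ENNReal.add_right_inj ZB_ne_top).mp e

lemma hA3B : ZA = ZB + (ZB + ZB) := by
  have e : ZB + ZA = ZB + (ZB + (ZB + ZB)) := by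
    calc ZB + ZA = ZA + ZB := by ring
      _ = Z4 := hABZ4
      _ = ZB + ZB + (ZB + ZB) := h4B.symm
      _ = ZB + (ZB + (ZB + ZB)) := by ring
  exact (ENNReal.add_right_inj ZB_ne_top).mp e

lemma hCeq : ZC = ZA + ZB := by
  have e : (ZC + ZC) + ZC = (ZC + ZC) + (ZA + ZB) := by
    calc (ZC + ZC) + ZC = ZC + (ZC + ZC) := by ring
      _ = ZX := rel_X_pf.symm
      _ = ZC + ZC + ZA + ZB := rel_X_tel
      _ = (ZC + ZC) + (ZA + ZB) := by ring
  exact (ENNReal.add_right_inj (ENNReal.add_ne_top.mpr ⟨ZC_ne_top, ZC_ne_top⟩)).mp e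

lemma main_real : ZC.toReal + 2 * ZA.toReal = 2 * ZB.toReal + 2 * ZC.toReal := by
  have hb := ZB_ne_top
  have hA : ZA.toReal = 3 * ZB.toReal := by
    rw [hA3B, ENNReal.toReal_add hb (ENNReal.add_ne_top.mpr ⟨hb, hb⟩), ENNReal.toReal_add hb hb]
    ring
  have hC : ZC.toReal = 4 * ZB.toReal := by
    rw [hCeq, ENNReal.toReal_add ZA_ne_top hb, hA]
    ring
  rw [hA, hC]
  ring

def pn (n : ℕ) : ℕ+ := ⟨n + 1, Nat.succ_pos n⟩

@[simp] lemma pn_coe (n : ℕ) : ((pn n : ℕ+) : ℕ) = n + 1 := rfl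

/-- pairs in gap coordinates -/
noncomputable def eq2 : (ℕ × ℕ) ≃ {f : Fin 2 → ℕ+ // StrictMono f} where
  toFun x := ⟨![pn x.1, pn (x.1 + x.2 + 1)], by
    rw [Fin.strictMono_iff_lt_succ, Fin.forall_fin_one, Fin.castSucc_zero, Fin.succ_zero_eq_one]
    rw [Matrix.cons_val_zero, Matrix.cons_val_one, Matrix.cons_val_zero, ← PNat.coe_lt_coe]
    simp only [pn_coe]
    omega⟩
  invFun s := ((s.1 0 : ℕ) - 1, (s.1 1 : ℕ) - (s.1 0 : ℕ) - 1)
  left_inv x := by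
    obtain ⟨a, d⟩ := x
    simp only [Matrix.cons_val_zero, Matrix.cons_val_one, Matrix.head_cons, pn_coe]
    exact Prod.ext (by omega) (by omega)
  right_inv s := by
    obtain ⟨f, hf⟩ := s
    have h01 : (f 0 : ℕ) < (f 1 : ℕ) := by
      rw [PNat.coe_lt_coe]
      exact hf (show (0 : Fin 2) < 1 by decide)
    have h0 : 1 ≤ (f 0 : ℕ) := (f 0).2
    apply Subtype.ext
    funext i
    revert i
    rw [Fin.forall_fin_two]
    constructor
    · apply PNat.coe_injective
      simp only [Matrix.cons_val_zero, pn_coe]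
      omega
    · apply PNat.coe_injective
      simp only [Matrix.cons_val_one, Matrix.head_cons, Matrix.cons_val_zero, pn_coe]
      omega

lemma mzv2_expand (k1 k2 : ℕ) :
    mzv [k1, k2] = ∑' m : {f : Fin 2 → ℕ+ // StrictMono f},
      (((m.1 0 : ℕ) : ℝ) ^ k1)⁻¹ * (((m.1 1 : ℕ) : ℝ) ^ k2)⁻¹ := by
  show (∑' m : {f : Fin 2 → ℕ+ // StrictMono f},
      ∏ i : Fin 2, ((m.1 i : ℝ) ^ ([k1, k2].get i))⁻¹) = _
  apply tsum_congr
  intro m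
  rw [Fin.prod_univ_two]
  rfl

lemma bridge_mzv22 : mzv [2, 2] = ZA.toReal := by
  rw [mzv2_expand 2 2,
    ← eq2.tsum_eq (fun m : {f : Fin 2 → ℕ+ // StrictMono f} =>
      (((m.1 0 : ℕ) : ℝ) ^ 2)⁻¹ * (((m.1 1 : ℕ) : ℝ) ^ 2)⁻¹), ZA,
    ENNReal.tsum_toReal_eq (fun p => by
      exact ENNReal.mul_ne_top (ENNReal.pow_ne_top (J_ne_top _)) (ENNReal.pow_ne_top (J_ne_top _)))]
  apply tsum_congr
  rintro ⟨a, d⟩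
  simp only [eq2, Equiv.coe_fn_mk, Matrix.cons_val_zero, Matrix.cons_val_one, Matrix.head_cons,
    pn_coe, ENNReal.toReal_mul, ENNReal.toReal_pow, J_toReal]
  rw [← inv_pow, ← inv_pow]
  push_cast
  ring


lemma bridge_mzv13 : mzv [1, 3] = ZB.toReal := by
  rw [mzv2_expand 1 3,
    ← eq2.tsum_eq (fun m : {f : Fin 2 → ℕ+ // StrictMono f} =>
      (((m.1 0 : ℕ) : ℝ) ^ 1)⁻¹ * (((m.1 1 : ℕ) : ℝ) ^ 3)⁻¹), ZB,
    ENNReal.tsum_toReal_eq (fun p => by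
      exact ENNReal.mul_ne_top (J_ne_top _) (ENNReal.pow_ne_top (J_ne_top _)))]
  apply tsum_congr
  rintro ⟨a, d⟩
  simp only [eq2, Equiv.coe_fn_mk, Matrix.cons_val_zero, Matrix.cons_val_one, Matrix.head_cons,
    pn_coe, ENNReal.toReal_mul, ENNReal.toReal_pow, J_toReal]
  rw [← inv_pow, ← inv_pow]
  push_cast
  ring

lemma forall_fin_three {p : Fin 3 → Prop} : (∀ i, p i) ↔ p 0 ∧ p 1 ∧ p 2 := by
  rw [Fin.forall_fin_succ, Fin.forall_fin_two, Fin.succ_zero_eq_one, Fin.succ_one_eq_two]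

/-- triples in gap coordinates -/
noncomputable def eq3 : (ℕ × ℕ × ℕ) ≃ {f : Fin 3 → ℕ+ // StrictMono f} where
  toFun x := ⟨![pn x.1, pn (x.1 + x.2.1 + 1), pn (x.1 + x.2.1 + x.2.2 + 2)], by
    rw [Fin.strictMono_iff_lt_succ, Fin.forall_fin_two, Fin.castSucc_zero, Fin.succ_zero_eq_one,
      Fin.castSucc_one, Fin.succ_one_eq_two]
    constructor
    · rw [Matrix.cons_val_zero, Matrix.cons_val_one, Matrix.cons_val_zero, ← PNat.coe_lt_coe]
      simp only [pn_coe]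
      omega
    · rw [Matrix.cons_val_two, Matrix.tail_cons, Matrix.head_cons,
        Matrix.cons_val_one, Matrix.cons_val_zero, ← PNat.coe_lt_coe]
      simp only [pn_coe]
      omega⟩
  invFun s := ((s.1 0 : ℕ) - 1, (s.1 1 : ℕ) - (s.1 0 : ℕ) - 1, (s.1 2 : ℕ) - (s.1 1 : ℕ) - 1)
  left_inv x := by
    obtain ⟨a, b, c⟩ := x
    simp only [Matrix.cons_val_zero, Matrix.cons_val_one, Matrix.head_cons,
      Matrix.cons_val_two, Matrix.tail_cons, pn_coe, Prod.mk.injEq]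
    refine ⟨by omega, by omega, by omega⟩
  right_inv s := by
    obtain ⟨f, hf⟩ := s
    have h01 : (f 0 : ℕ) < (f 1 : ℕ) := by
      rw [PNat.coe_lt_coe]; exact hf (show (0 : Fin 3) < 1 by decide)
    have h12 : (f 1 : ℕ) < (f 2 : ℕ) := by
      rw [PNat.coe_lt_coe]; exact hf (show (1 : Fin 3) < 2 by decide)
    have h0 : 1 ≤ (f 0 : ℕ) := (f 0).2
    apply Subtype.ext
    funext i
    revert i
    rw [forall_fin_three]
    refine ⟨?_, ?_, ?_⟩
    · apply PNat.coe_injective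
      simp only [Matrix.cons_val_zero, pn_coe]
      omega
    · apply PNat.coe_injective
      simp only [Matrix.cons_val_one, Matrix.head_cons, Matrix.cons_val_zero, pn_coe]
      omega
    · apply PNat.coe_injective
      simp only [Matrix.cons_val_two, Matrix.tail_cons, Matrix.head_cons, pn_coe]
      omega

lemma mzv3_expand (k1 k2 k3 : ℕ) :
    mzv [k1, k2, k3] = ∑' m : {f : Fin 3 → ℕ+ // StrictMono f},
      (((m.1 0 : ℕ) : ℝ) ^ k1)⁻¹ * (((m.1 1 : ℕ) : ℝ) ^ k2)⁻¹ * (((m.1 2 : ℕ) : ℝ) ^ k3)⁻¹ := by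
  show (∑' m : {f : Fin 3 → ℕ+ // StrictMono f},
      ∏ i : Fin 3, ((m.1 i : ℝ) ^ ([k1, k2, k3].get i))⁻¹) = _
  apply tsum_congr
  intro m
  rw [Fin.prod_univ_three]
  rfl

lemma bridge_mzv112 : mzv [1, 1, 2] = ZC.toReal := by
  rw [mzv3_expand 1 1 2,
    ← eq3.tsum_eq (fun m : {f : Fin 3 → ℕ+ // StrictMono f} =>
      (((m.1 0 : ℕ) : ℝ) ^ 1)⁻¹ * (((m.1 1 : ℕ) : ℝ) ^ 1)⁻¹ * (((m.1 2 : ℕ) : ℝ) ^ 2)⁻¹), ZC,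
    ENNReal.tsum_toReal_eq (fun t => by
      exact ENNReal.mul_ne_top (ENNReal.mul_ne_top (J_ne_top _) (J_ne_top _))
        (ENNReal.pow_ne_top (J_ne_top _)))]
  apply tsum_congr
  rintro ⟨a, b, c⟩
  simp only [eq3, Equiv.coe_fn_mk, Matrix.cons_val_zero, Matrix.cons_val_one, Matrix.head_cons,
    ENNReal.toReal_mul, ENNReal.toReal_pow, J_toReal]
  simp only [Matrix.cons_val_two, Matrix.tail_cons, Matrix.head_cons, pn_coe]
  rw [← inv_pow, ← inv_pow, ← inv_pow]
  push_cast
  ring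


end MzvAux

theorem mzv_rel_7 : mzv [1,1,2] + 2 * mzv [2,2] = 2 * mzv [1,3] + 2 * mzv [1,1,2] := by
  rw [MzvAux.bridge_mzv112, MzvAux.bridge_mzv22, MzvAux.bridge_mzv13]
  exact MzvAux.main_real
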